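/- Let U, V, K, L satisfy the COIN conditional independence p(k,l|u,v) = p(k|u)p(l|v) on the support of p(u,v). Then I(U;V) = I(K;L) if and only if p(k,l,u,v) = p(k,l)·p(u|k)·p(v|l) for all (k,l,u,v) (equivalently, U and V are conditionally independent given (K,L), and U ⟂ L | K, V ⟂ K | L). -/

import Mathlib

set_option linter.unusedSectionVars false


open Finset

variable {U V K L : Type*} [Fintype U] [Fintype V] [Fintype K] [Fintype L]

/-- Marginal p(u,v) of a joint pmf p(u,v,k,l). -/
noncomputable def pUV (p : U → V → K → L → ℝ) (u : U) (v : V) : ℝ := ∑ k, ∑ l, p u v k l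

/-- Marginal p(u). -/
noncomputable def pU (p : U → V → K → L → ℝ) (u : U) : ℝ := ∑ v, pUV p u v

/-- Marginal p(v). -/
noncomputable def pV (p : U → V → K → L → ℝ) (v : V) : ℝ := ∑ u, pUV p u v

/-- Marginal p(k,l). -/
noncomputable def pKL (p : U → V → K → L → ℝ) (k : K) (l : L) : ℝ := ∑ u, ∑ v, p u v k l

/-- Marginal p(k). -/
noncomputable def pK (p : U → V → K → L → ℝ) (k : K) : ℝ := ∑ l, pKL p k l

/-- Marginal p(l). -/
noncomputable def pL (p : U → V → K → L → ℝ) (l : L) : ℝ := ∑ k, pKL p k l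

/-- Marginal p(u,k). -/
noncomputable def pUK (p : U → V → K → L → ℝ) (u : U) (k : K) : ℝ := ∑ v, ∑ l, p u v k l

/-- Marginal p(v,l). -/
noncomputable def pVL (p : U → V → K → L → ℝ) (v : V) (l : L) : ℝ := ∑ u, ∑ k, p u v k l

/-- Mutual information of a joint pmf on X × Y (convention 0·log(·) = 0, x/0 = 0, log 0 = 0). -/
noncomputable def MI {X Y : Type*} [Fintype X] [Fintype Y] (q : X → Y → ℝ) : ℝ :=
  ∑ x, ∑ y, q x y * Real.log (q x y / ((∑ y', q x y') * (∑ x', q x' y)))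

/-- The COIN conditional independence assumption: p(k,l|u,v) = p(k|u)·p(l|v)
whenever p(u,v) > 0. -/
def CondIndep (p : U → V → K → L → ℝ) : Prop :=
  ∀ u v k l, 0 < pUV p u v →
    p u v k l / pUV p u v = (pUK p u k / pU p u) * (pVL p v l / pV p v)

/-- A joint pmf: nonnegative, sums to one. -/
def IsPmf4 (p : U → V → K → L → ℝ) : Prop :=
  (∀ u v k l, 0 ≤ p u v k l) ∧ ∑ u, ∑ v, ∑ k, ∑ l, p u v k l = 1

/-! ### Auxiliary lemmas -/

section Aux

lemma sum3_comm {α β γ : Type*} [Fintype α] [Fintype β] [Fintype γ] (f : α → β → γ → ℝ) :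
    ∑ a, ∑ b, ∑ c, f a b c = ∑ c, ∑ a, ∑ b, f a b c :=
  calc ∑ a, ∑ b, ∑ c, f a b c
      = ∑ a, ∑ c, ∑ b, f a b c := Finset.sum_congr rfl (fun _ _ => Finset.sum_comm)
    _ = ∑ c, ∑ a, ∑ b, f a b c := Finset.sum_comm

lemma sum4_comm {α β γ δ : Type*} [Fintype α] [Fintype β] [Fintype γ] [Fintype δ]
    (f : α → β → γ → δ → ℝ) :
    ∑ a, ∑ b, ∑ c, ∑ d, f a b c d = ∑ c, ∑ d, ∑ a, ∑ b, f a b c d :=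
  calc ∑ a, ∑ b, ∑ c, ∑ d, f a b c d
      = ∑ a, ∑ c, ∑ b, ∑ d, f a b c d :=
        Finset.sum_congr rfl (fun _ _ => Finset.sum_comm)
    _ = ∑ c, ∑ a, ∑ b, ∑ d, f a b c d := Finset.sum_comm
    _ = ∑ c, ∑ a, ∑ d, ∑ b, f a b c d :=
        Finset.sum_congr rfl (fun _ _ => Finset.sum_congr rfl (fun _ _ => Finset.sum_comm))
    _ = ∑ c, ∑ d, ∑ a, ∑ b, f a b c d :=
        Finset.sum_congr rfl (fun _ _ => Finset.sum_comm)

variable (p : U → V → K → L → ℝ)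

/-- The factorized comparison distribution q(u,v,k,l) = p(k,l)·p(u|k)·p(v|l). -/
noncomputable def qAux (u : U) (v : V) (k : K) (l : L) : ℝ :=
  pKL p k l * (pUK p u k / pK p k) * (pVL p v l / pL p l)

variable {p}

section Nonneg
variable (hp0 : ∀ u v k l, 0 ≤ p u v k l)
include hp0

lemma pUV_nonneg (u : U) (v : V) : 0 ≤ pUV p u v :=
  Finset.sum_nonneg fun _ _ => Finset.sum_nonneg fun _ _ => hp0 _ _ _ _

lemma pKL_nonneg (k : K) (l : L) : 0 ≤ pKL p k l :=
  Finset.sum_nonneg fun _ _ => Finset.sum_nonneg fun _ _ => hp0 _ _ _ _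

lemma pUK_nonneg (u : U) (k : K) : 0 ≤ pUK p u k :=
  Finset.sum_nonneg fun _ _ => Finset.sum_nonneg fun _ _ => hp0 _ _ _ _

lemma pVL_nonneg (v : V) (l : L) : 0 ≤ pVL p v l :=
  Finset.sum_nonneg fun _ _ => Finset.sum_nonneg fun _ _ => hp0 _ _ _ _

lemma pU_nonneg (u : U) : 0 ≤ pU p u :=
  Finset.sum_nonneg fun _ _ => pUV_nonneg hp0 _ _

lemma pV_nonneg (v : V) : 0 ≤ pV p v :=
  Finset.sum_nonneg fun _ _ => pUV_nonneg hp0 _ _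

lemma pK_nonneg (k : K) : 0 ≤ pK p k :=
  Finset.sum_nonneg fun _ _ => pKL_nonneg hp0 _ _

lemma pL_nonneg (l : L) : 0 ≤ pL p l :=
  Finset.sum_nonneg fun _ _ => pKL_nonneg hp0 _ _

lemma le_pUV (u : U) (v : V) (k : K) (l : L) : p u v k l ≤ pUV p u v :=
  calc p u v k l ≤ ∑ l', p u v k l' :=
        Finset.single_le_sum (f := fun l' => p u v k l') (fun _ _ => hp0 _ _ _ _) (mem_univ l)
    _ ≤ ∑ k', ∑ l', p u v k' l' :=
        Finset.single_le_sum (f := fun k' => ∑ l', p u v k' l')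
          (fun _ _ => Finset.sum_nonneg fun _ _ => hp0 _ _ _ _) (mem_univ k)

lemma le_pKL (u : U) (v : V) (k : K) (l : L) : p u v k l ≤ pKL p k l :=
  calc p u v k l ≤ ∑ v', p u v' k l :=
        Finset.single_le_sum (f := fun v' => p u v' k l) (fun _ _ => hp0 _ _ _ _) (mem_univ v)
    _ ≤ ∑ u', ∑ v', p u' v' k l :=
        Finset.single_le_sum (f := fun u' => ∑ v', p u' v' k l)
          (fun _ _ => Finset.sum_nonneg fun _ _ => hp0 _ _ _ _) (mem_univ u)

lemma le_pUK (u : U) (v : V) (k : K) (l : L) : p u v k l ≤ pUK p u k :=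
  calc p u v k l ≤ ∑ l', p u v k l' :=
        Finset.single_le_sum (f := fun l' => p u v k l') (fun _ _ => hp0 _ _ _ _) (mem_univ l)
    _ ≤ ∑ v', ∑ l', p u v' k l' :=
        Finset.single_le_sum (f := fun v' => ∑ l', p u v' k l')
          (fun _ _ => Finset.sum_nonneg fun _ _ => hp0 _ _ _ _) (mem_univ v)

lemma le_pVL (u : U) (v : V) (k : K) (l : L) : p u v k l ≤ pVL p v l :=
  calc p u v k l ≤ ∑ k', p u v k' l :=
        Finset.single_le_sum (f := fun k' => p u v k' l) (fun _ _ => hp0 _ _ _ _) (mem_univ k)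
    _ ≤ ∑ u', ∑ k', p u' v k' l :=
        Finset.single_le_sum (f := fun u' => ∑ k', p u' v k' l)
          (fun _ _ => Finset.sum_nonneg fun _ _ => hp0 _ _ _ _) (mem_univ u)

lemma pUV_le_pU (u : U) (v : V) : pUV p u v ≤ pU p u :=
  Finset.single_le_sum (f := fun v' => pUV p u v') (fun _ _ => pUV_nonneg hp0 _ _) (mem_univ v)

lemma pUV_le_pV (u : U) (v : V) : pUV p u v ≤ pV p v :=
  Finset.single_le_sum (f := fun u' => pUV p u' v) (fun _ _ => pUV_nonneg hp0 _ _) (mem_univ u)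

lemma pKL_le_pK (k : K) (l : L) : pKL p k l ≤ pK p k :=
  Finset.single_le_sum (f := fun l' => pKL p k l') (fun _ _ => pKL_nonneg hp0 _ _) (mem_univ l)

lemma pKL_le_pL (k : K) (l : L) : pKL p k l ≤ pL p l :=
  Finset.single_le_sum (f := fun k' => pKL p k' l) (fun _ _ => pKL_nonneg hp0 _ _) (mem_univ k)

lemma qAux_nonneg (u : U) (v : V) (k : K) (l : L) : 0 ≤ qAux p u v k l := by
  have h1 := pKL_nonneg hp0 k l
  have h2 := pUK_nonneg hp0 u k
  have h3 := pVL_nonneg hp0 v l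
  have h4 := pK_nonneg hp0 k
  have h5 := pL_nonneg hp0 l
  unfold qAux
  positivity

lemma qAux_pos (u : U) (v : V) (k : K) (l : L) (h : 0 < p u v k l) :
    0 < qAux p u v k l := by
  have hKL : 0 < pKL p k l := lt_of_lt_of_le h (le_pKL hp0 u v k l)
  have hUK : 0 < pUK p u k := lt_of_lt_of_le h (le_pUK hp0 u v k l)
  have hVL : 0 < pVL p v l := lt_of_lt_of_le h (le_pVL hp0 u v k l)
  have hK : 0 < pK p k := lt_of_lt_of_le hKL (pKL_le_pK hp0 k l)
  have hL : 0 < pL p l := lt_of_lt_of_le hKL (pKL_le_pL hp0 k l)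
  unfold qAux
  positivity

end Nonneg

lemma sum_pUK_eq_pK (k : K) : ∑ u, pUK p u k = pK p k := by
  unfold pUK pK pKL
  exact sum3_comm (fun u v l => p u v k l)

lemma sum_pVL_eq_pL (l : L) : ∑ v, pVL p v l = pL p l := by
  unfold pVL pL pKL
  calc ∑ v, ∑ u, ∑ k, p u v k l
      = ∑ k, ∑ v, ∑ u, p u v k l := sum3_comm (fun v u k => p u v k l)
    _ = ∑ k, ∑ u, ∑ v, p u v k l := Finset.sum_congr rfl fun _ _ => Finset.sum_comm

lemma sum_qAux_inner (hp0 : ∀ u v k l, 0 ≤ p u v k l) (k : K) (l : L) :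
    ∑ u, ∑ v, qAux p u v k l = pKL p k l := by
  rcases eq_or_lt_of_le (pKL_nonneg hp0 k l) with h0 | h0
  · rw [← h0]
    apply Finset.sum_eq_zero; intro u _
    apply Finset.sum_eq_zero; intro v _
    unfold qAux
    rw [← h0]
    ring
  · have hK : 0 < pK p k := lt_of_lt_of_le h0 (pKL_le_pK hp0 k l)
    have hL : 0 < pL p l := lt_of_lt_of_le h0 (pKL_le_pL hp0 k l)
    have hv : ∀ u, ∑ v, qAux p u v k l = pKL p k l * (pUK p u k / pK p k) := by
      intro u
      unfold qAux
      rw [← Finset.mul_sum, ← Finset.sum_div, sum_pVL_eq_pL, div_self (ne_of_gt hL), mul_one]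
    calc ∑ u, ∑ v, qAux p u v k l
        = ∑ u, pKL p k l * (pUK p u k / pK p k) :=
          Finset.sum_congr rfl fun u _ => hv u
      _ = pKL p k l := by
          rw [← Finset.mul_sum, ← Finset.sum_div, sum_pUK_eq_pK, div_self (ne_of_gt hK),
            mul_one]

lemma sum_qAux_total (hp0 : ∀ u v k l, 0 ≤ p u v k l)
    (hp1 : ∑ u, ∑ v, ∑ k, ∑ l, p u v k l = 1) :
    ∑ u, ∑ v, ∑ k, ∑ l, qAux p u v k l = 1 := by
  have h1 : ∑ u, ∑ v, ∑ k, ∑ l, qAux p u v k l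
      = ∑ k, ∑ l, ∑ u, ∑ v, qAux p u v k l := sum4_comm _
  have h2 : ∑ k, ∑ l, ∑ u, ∑ v, qAux p u v k l = ∑ k, ∑ l, pKL p k l :=
    Finset.sum_congr rfl fun k _ => Finset.sum_congr rfl fun l _ => sum_qAux_inner hp0 k l
  have h3 : ∑ k, ∑ l, pKL p k l = ∑ u, ∑ v, ∑ k, ∑ l, p u v k l := by
    unfold pKL
    exact (sum4_comm _).symm
  rw [h1, h2, h3, hp1]

/-! ### Gibbs' inequality and its equality case -/

lemma gibbs_term_ge {f g : ℝ} (hf : 0 ≤ f) (hg : 0 ≤ g) (hfg : 0 < f → 0 < g) :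
    f - g ≤ f * Real.log (f / g) := by
  rcases eq_or_lt_of_le hf with h | h
  · rw [← h]; simpa using hg
  · have hg' := hfg h
    have hlog : Real.log (g / f) ≤ g / f - 1 :=
      Real.log_le_sub_one_of_pos (by positivity)
    have hneg : Real.log (f / g) = -Real.log (g / f) := by
      rw [← Real.log_inv]
      congr 1
      rw [inv_div]
    have h1 : f * Real.log (g / f) ≤ f * (g / f - 1) :=
      mul_le_mul_of_nonneg_left hlog h.le
    have h2 : f * (g / f) = g := by field_simp
    rw [hneg]
    nlinarith

lemma gibbs_term_eq {f g : ℝ} (hf : 0 ≤ f) (hg : 0 ≤ g) (hfg : 0 < f → 0 < g)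
    (he : f * Real.log (f / g) = f - g) : f = g := by
  rcases eq_or_lt_of_le hf with h | h
  · rw [← h] at he ⊢
    have hg0 : g = 0 := by simpa using he.symm
    exact hg0.symm
  · have hg' := hfg h
    by_contra hne
    have hne' : g / f ≠ 1 := by
      intro hgf
      apply hne
      field_simp at hgf
      linarith
    have hlog : Real.log (g / f) < g / f - 1 :=
      Real.log_lt_sub_one_of_pos (by positivity) hne'
    have hneg : Real.log (f / g) = -Real.log (g / f) := by
      rw [← Real.log_inv]
      congr 1
      rw [inv_div]
    have h1 : f * Real.log (g / f) < f * (g / f - 1) :=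
      mul_lt_mul_of_pos_left hlog h
    have h2 : f * (g / f) = g := by field_simp
    rw [hneg] at he
    nlinarith

lemma gibbs {ι : Type*} [Fintype ι] (f g : ι → ℝ) (hf : ∀ i, 0 ≤ f i)
    (hg : ∀ i, 0 ≤ g i) (hfg : ∀ i, 0 < f i → 0 < g i)
    (hsum : ∑ i, f i = ∑ i, g i) :
    ∑ i, f i * Real.log (f i / g i) = 0 ↔ ∀ i, f i = g i := by
  constructor
  · intro h0 i
    have hnn : ∀ j ∈ (univ : Finset ι),
        0 ≤ f j * Real.log (f j / g j) - (f j - g j) := fun j _ => by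
      linarith [gibbs_term_ge (hf j) (hg j) (hfg j)]
    have hsum0 : ∑ j, (f j * Real.log (f j / g j) - (f j - g j)) = 0 := by
      rw [Finset.sum_sub_distrib, h0, Finset.sum_sub_distrib, hsum]
      ring
    have hterm := (Finset.sum_eq_zero_iff_of_nonneg hnn).mp hsum0 i (mem_univ i)
    exact gibbs_term_eq (hf i) (hg i) (hfg i) (by linarith)
  · intro h
    apply Finset.sum_eq_zero
    intro i _
    rw [h i]
    rcases eq_or_lt_of_le (hg i) with hz | hz
    · rw [← hz]; ring
    · rw [div_self (ne_of_gt hz), Real.log_one, mul_zero]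

end Aux

/-- Equality case: I(U;V) = I(K;L) iff p(k,l,u,v) = p(k,l)·p(u|k)·p(v|l) for all
(k,l,u,v). -/
theorem stmt15 (p : U → V → K → L → ℝ) (hp : IsPmf4 p) (hci : CondIndep p) :
    MI (pUV p) = MI (pKL p) ↔
      ∀ k l u v, p u v k l = pKL p k l * (pUK p u k / pK p k) * (pVL p v l / pL p l) := by
  obtain ⟨hp0, hp1⟩ := hp
  -- Step 1: MI(pUV p) expressed as a 4-fold sum.
  have hMIUV : MI (pUV p)
      = ∑ u, ∑ v, ∑ k, ∑ l,
          p u v k l * Real.log (pUV p u v / (pU p u * pV p v)) := by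
    have h0 : MI (pUV p)
        = ∑ u, ∑ v, pUV p u v * Real.log (pUV p u v / (pU p u * pV p v)) := rfl
    rw [h0]
    refine Finset.sum_congr rfl fun u _ => Finset.sum_congr rfl fun v _ => ?_
    rw [show pUV p u v * Real.log (pUV p u v / (pU p u * pV p v))
        = (∑ k, ∑ l, p u v k l) * Real.log (pUV p u v / (pU p u * pV p v)) from rfl,
      Finset.sum_mul]
    exact Finset.sum_congr rfl fun k _ => Finset.sum_mul _ _ _
  -- Step 2: MI(pKL p) expressed as a 4-fold sum (in the same order of summation).
  have hMIKL : MI (pKL p)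
      = ∑ u, ∑ v, ∑ k, ∑ l,
          p u v k l * Real.log (pKL p k l / (pK p k * pL p l)) := by
    have h0 : MI (pKL p)
        = ∑ k, ∑ l, pKL p k l * Real.log (pKL p k l / (pK p k * pL p l)) := rfl
    have h1 : MI (pKL p)
        = ∑ k, ∑ l, ∑ u, ∑ v,
            p u v k l * Real.log (pKL p k l / (pK p k * pL p l)) := by
      rw [h0]
      refine Finset.sum_congr rfl fun k _ => Finset.sum_congr rfl fun l _ => ?_
      rw [show pKL p k l * Real.log (pKL p k l / (pK p k * pL p l))
          = (∑ u, ∑ v, p u v k l) * Real.log (pKL p k l / (pK p k * pL p l)) from rfl,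
        Finset.sum_mul]
      exact Finset.sum_congr rfl fun u _ => Finset.sum_mul _ _ _
    rw [h1, sum4_comm (fun k l u v => p u v k l * Real.log (pKL p k l / (pK p k * pL p l)))]
  -- Step 3: pointwise identity for the difference of logs.
  have hpt : ∀ u v k l,
      p u v k l * Real.log (pUV p u v / (pU p u * pV p v))
        - p u v k l * Real.log (pKL p k l / (pK p k * pL p l))
      = p u v k l * Real.log (p u v k l / qAux p u v k l) := by
    intro u v k l
    rcases eq_or_lt_of_le (hp0 u v k l) with h | h
    · rw [← h]; ring
    · have hpUV : 0 < pUV p u v := lt_of_lt_of_le h (le_pUV hp0 u v k l)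
      have hpU : 0 < pU p u := lt_of_lt_of_le hpUV (pUV_le_pU hp0 u v)
      have hpV : 0 < pV p v := lt_of_lt_of_le hpUV (pUV_le_pV hp0 u v)
      have hKL : 0 < pKL p k l := lt_of_lt_of_le h (le_pKL hp0 u v k l)
      have hUK : 0 < pUK p u k := lt_of_lt_of_le h (le_pUK hp0 u v k l)
      have hVL : 0 < pVL p v l := lt_of_lt_of_le h (le_pVL hp0 u v k l)
      have hK : 0 < pK p k := lt_of_lt_of_le hKL (pKL_le_pK hp0 k l)
      have hL : 0 < pL p l := lt_of_lt_of_le hKL (pKL_le_pL hp0 k l)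
      have hcoin := hci u v k l hpUV
      have hpe : p u v k l = pUV p u v * ((pUK p u k / pU p u) * (pVL p v l / pV p v)) := by
        field_simp at hcoin
        field_simp
        linear_combination hcoin
      have hratio : p u v k l / qAux p u v k l
          = (pUV p u v / (pU p u * pV p v)) / (pKL p k l / (pK p k * pL p l)) := by
        rw [hpe]
        unfold qAux
        field_simp
      have hlog : Real.log ((pUV p u v / (pU p u * pV p v)) / (pKL p k l / (pK p k * pL p l)))
          = Real.log (pUV p u v / (pU p u * pV p v))
            - Real.log (pKL p k l / (pK p k * pL p l)) :=
        Real.log_div (by positivity) (by positivity)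
      rw [hratio, hlog]
      ring
  -- Step 4: MI difference equals the KL divergence.
  have hD : MI (pUV p) - MI (pKL p)
      = ∑ u, ∑ v, ∑ k, ∑ l, p u v k l * Real.log (p u v k l / qAux p u v k l) := by
    rw [hMIUV, hMIKL, ← Finset.sum_sub_distrib]
    refine Finset.sum_congr rfl fun u _ => ?_
    rw [← Finset.sum_sub_distrib]
    refine Finset.sum_congr rfl fun v _ => ?_
    rw [← Finset.sum_sub_distrib]
    refine Finset.sum_congr rfl fun k _ => ?_
    rw [← Finset.sum_sub_distrib]
    exact Finset.sum_congr rfl fun l _ => hpt u v k l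
  -- Step 5: apply Gibbs' inequality over the product type.
  set F : U × V × K × L → ℝ := fun x => p x.1 x.2.1 x.2.2.1 x.2.2.2 with hF
  set G : U × V × K × L → ℝ := fun x => qAux p x.1 x.2.1 x.2.2.1 x.2.2.2 with hG
  have hsumF : ∑ x, F x = 1 := by
    rw [hF]
    rw [Fintype.sum_prod_type]
    simp_rw [Fintype.sum_prod_type]
    exact hp1
  have hsumG : ∑ x, G x = 1 := by
    rw [hG]
    rw [Fintype.sum_prod_type]
    simp_rw [Fintype.sum_prod_type]
    exact sum_qAux_total hp0 hp1
  have hDprod : MI (pUV p) - MI (pKL p) = ∑ x, F x * Real.log (F x / G x) := by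
    rw [hD, hF, hG]
    rw [Fintype.sum_prod_type]
    simp_rw [Fintype.sum_prod_type]
  have hgibbs := gibbs F G (fun x => hp0 _ _ _ _) (fun x => qAux_nonneg hp0 _ _ _ _)
    (fun x => qAux_pos hp0 _ _ _ _) (by rw [hsumF, hsumG])
  constructor
  · intro hMI
    have hzero : ∑ x, F x * Real.log (F x / G x) = 0 := by
      rw [← hDprod, hMI]; ring
    intro k l u v
    exact hgibbs.mp hzero (u, v, k, l)
  · intro heq
    have : ∀ x, F x = G x := fun x => heq x.2.2.1 x.2.2.2 x.1 x.2.1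
    have hzero := hgibbs.mpr this
    have := hDprod.trans hzero
    linarith
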